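/- Let C be a linear [n,k] code over F_q with locality r and availability t, and let d_i^⊥ denote the i-th generalized Hamming weight of the dual code C^⊥. Fix i with 1 ≤ i ≤ n−k and e ≥ d_i^⊥ such that e − i < k. Then there exists a linear code C' of length n − e, dimension at least k + i − e, minimum distance at least d_min(C), which also has locality r and availability t. -/

import Mathlib

open Finset

/-- The Hamming weight of a vector. -/
def wt {F : Type} [Zero F] [DecidableEq F] {ι : Type} [Fintype ι] (v : ι → F) : ℕ :=
  (univ.filter (fun j => v j ≠ 0)).card

/-- The standard dot product with `c`, as a linear map. -/
noncomputable def dotL {F : Type} [Field F] {ι : Type} [Fintype ι] (c : ι → F) :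
    (ι → F) →ₗ[F] F :=
  ∑ j, c j • (LinearMap.proj j : (ι → F) →ₗ[F] F)

/-- The dual code of a linear code `C`: all vectors orthogonal (for the standard dot
product) to every codeword of `C`. -/
noncomputable def dualCode {F : Type} [Field F] {ι : Type} [Fintype ι]
    (C : Submodule F (ι → F)) : Submodule F (ι → F) :=
  ⨅ c ∈ C, LinearMap.ker (dotL c)

/-- `C` has locality `r` and availability `t`: for each coordinate `j` there are `t`
dual codewords of weight at most `r+1`, each containing `j` in its support, whose
supports pairwise intersect exactly in `{j}`. -/
def HasAvailability {F : Type} [Field F] [DecidableEq F] {ι : Type} [Fintype ι]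
    (C : Submodule F (ι → F)) (r t : ℕ) : Prop :=
  ∀ j : ι, ∃ h : Fin t → (ι → F),
    (∀ a, h a ∈ dualCode C) ∧ (∀ a, wt (h a) ≤ r + 1) ∧ (∀ a, h a j ≠ 0) ∧
    (∀ a b, a ≠ b → {l | h a l ≠ 0} ∩ {l | h b l ≠ 0} = {j})

/-- The minimum distance (minimum weight of a nonzero codeword) of a linear code. -/
noncomputable def dmin {F : Type} [Field F] [DecidableEq F] {ι : Type} [Fintype ι]
    (C : Submodule F (ι → F)) : ℕ :=
  sInf {w | ∃ c ∈ C, c ≠ 0 ∧ wt c = w}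

/-- The `i`-th generalized Hamming weight of a code `C`: the minimum support size of an
`i`-dimensional subspace of `C`. -/
noncomputable def ghw {F : Type} [Field F] {ι : Type} [Fintype ι]
    (C : Submodule F (ι → F)) (i : ℕ) : ℕ :=
  sInf {w | ∃ D : Submodule F (ι → F), D ≤ C ∧ Module.finrank F D = i ∧
    Nat.card {j : ι | ∃ v ∈ D, v j ≠ 0} = w}

/-- Shortening bound: if `C` is an `[n,k]` code over `F_q` with locality `r` and
availability `t`, `d_i^⊥` is the `i`-th generalized Hamming weight of `C^⊥`,
`1 ≤ i ≤ n - k`, `e ≥ d_i^⊥`, and `e - i < k`, then there exists a linear code `C'` of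
length `n - e`, dimension at least `k + i - e`, minimum distance at least `d_min(C)`,
with locality `r` and availability `t`. -/
lemma dotL_apply {F : Type} [Field F] {ι : Type} [Fintype ι] (c v : ι → F) :
    dotL c v = ∑ j, c j * v j := by
  simp [dotL, smul_eq_mul]

lemma mem_dualCode {F : Type} [Field F] {ι : Type} [Fintype ι] {C : Submodule F (ι → F)} {v : ι → F} :
    v ∈ dualCode C ↔ ∀ c ∈ C, ∑ j, c j * v j = 0 := by
  simp [dualCode, dotL_apply]

noncomputable def dotLin (F : Type) [Field F] (ι : Type) [Fintype ι] :
    (ι → F) →ₗ[F] Module.Dual F (ι → F) where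
  toFun := dotL
  map_add' x y := by ext v; simp [dotL_apply, add_mul, Finset.sum_add_distrib]
  map_smul' a x := by ext v; simp [dotL_apply, Finset.mul_sum, mul_assoc]

-- dimension of the dual code
lemma dualCode_finrank_ge {F : Type} [Field F] {n : ℕ} (C : Submodule F (Fin n → F)) :
    n - Module.finrank F C ≤ Module.finrank F (dualCode C) := by
  classical
  set Φ : (Fin n → F) →ₗ[F] Module.Dual F C := C.subtype.dualMap ∘ₗ dotLin F (Fin n) with hΦ
  have hker : dualCode C = LinearMap.ker Φ := by
    ext v
    rw [mem_dualCode, LinearMap.mem_ker]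
    constructor
    · intro h
      ext c
      simpa [Φ, dotLin, dotL_apply, mul_comm] using h c.1 c.2
    · intro h c hc
      have := congrFun (congrArg (fun f => f.toFun) h) ⟨c, hc⟩
      simpa [Φ, dotLin, dotL_apply, mul_comm] using this
  have h1 := LinearMap.finrank_range_add_finrank_ker Φ
  have h2 : Module.finrank F (LinearMap.range Φ) ≤ Module.finrank F C := by
    have := Submodule.finrank_le (LinearMap.range Φ)
    rwa [Subspace.dual_finrank_eq] at this
  have h3 : Module.finrank F (Fin n → F) = n := by simp
  rw [hker]
  omega

lemma exists_subspace_finrank {F : Type} [Field F] {M : Type} [AddCommGroup M] [Module F M]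
    [FiniteDimensional F M] (P : Submodule F M) {i : ℕ} (hi : i ≤ Module.finrank F P) :
    ∃ D : Submodule F M, D ≤ P ∧ Module.finrank F D = i := by
  obtain ⟨f, hf⟩ := exists_linearIndependent_of_le_finrank hi
  have hf' : LinearIndependent F (P.subtype ∘ f) := hf.map' P.subtype P.ker_subtype
  refine ⟨Submodule.span F (Set.range (P.subtype ∘ f)), ?_, ?_⟩
  · rw [Submodule.span_le]
    rintro _ ⟨a, rfl⟩
    exact (f a).2
  · rw [finrank_span_eq_card hf']
    simp

theorem stmt8 {F : Type} [Field F] [Fintype F] [DecidableEq F]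
    (n r t i e : ℕ) (C : Submodule F (Fin n → F))
    (hav : HasAvailability C r t)
    (hi1 : 1 ≤ i) (hi2 : i ≤ n - Module.finrank F C)
    (he : ghw (dualCode C) i ≤ e)
    (hek : e < Module.finrank F C + i) :
    ∃ C' : Submodule F (Fin (n - e) → F),
      HasAvailability C' r t ∧
      (Module.finrank F C : ℤ) + i - e ≤ Module.finrank F C' ∧
      dmin C ≤ dmin C' := by
  classical
  set k := Module.finrank F C with hk
  have hkn : k ≤ n := by
    have h := Submodule.finrank_le C
    simpa using h
  have hen : e ≤ n := by omega
  -- choose an i-dimensional subspace D of the dual code with support of size ≤ e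
  have hidual : i ≤ Module.finrank F (dualCode C) := le_trans hi2 (dualCode_finrank_ge C)
  obtain ⟨D₀, hD₀le, hD₀rank⟩ := exists_subspace_finrank (dualCode C) hidual
  have hne : {w | ∃ D : Submodule F (Fin n → F), D ≤ dualCode C ∧ Module.finrank F D = i ∧
      Nat.card {j : Fin n | ∃ v ∈ D, v j ≠ 0} = w}.Nonempty :=
    ⟨_, D₀, hD₀le, hD₀rank, rfl⟩
  obtain ⟨D, hDle, hDrank, hDcard⟩ := Nat.sInf_mem hne
  have hDe : Nat.card {j : Fin n | ∃ v ∈ D, v j ≠ 0} ≤ e := le_trans (le_of_eq hDcard) he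
  -- a set S of e coordinates containing the support of D
  have hsuppcard : {j : Fin n | ∃ v ∈ D, v j ≠ 0}.toFinset.card ≤ e := by
    rwa [← Set.ncard_eq_toFinset_card', ← Nat.card_coe_set_eq]
  obtain ⟨S, hsS, -, hScard⟩ := Finset.exists_subsuperset_card_eq
    (Finset.subset_univ {j : Fin n | ∃ v ∈ D, v j ≠ 0}.toFinset) hsuppcard
    (by simpa using hen)
  have hSsupp : ∀ j, j ∉ S → ∀ v ∈ D, v j = 0 := by
    intro j hj v hv
    by_contra h
    exact hj (hsS (Set.mem_toFinset.mpr ⟨v, hv, h⟩))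
  have hcompl : Sᶜ.card = n - e := by
    rw [Finset.card_compl, hScard]; simp
  set g : Fin (n - e) ≃ ↥(Sᶜ) := (Finset.equivFinOfCardEq hcompl).symm with hg
  set emb : Fin (n - e) → Fin n := fun a => ((g a : ↥(Sᶜ)) : Fin n) with hemb
  have hembInj : Function.Injective emb := by
    intro a b hab
    exact g.injective (Subtype.ext hab)
  have hembS : ∀ a, emb a ∉ S := fun a => Finset.mem_compl.mp (g a).2
  have hembSurj : ∀ j, j ∉ S → ∃ a, emb a = j := by
    intro j hj
    exact ⟨g.symm ⟨j, Finset.mem_compl.mpr hj⟩, by simp [hemb]⟩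
  set ρ : (Fin n → F) →ₗ[F] (Fin (n - e) → F) := LinearMap.funLeft F F emb with hρ
  have hρap : ∀ (v : Fin n → F) (a : Fin (n - e)), ρ v a = v (emb a) := fun v a => rfl
  set ψ : (Fin n → F) →ₗ[F] (↥S → F) := LinearMap.funLeft F F (fun x : ↥S => (x : Fin n))
    with hψ
  set Z : Submodule F (Fin n → F) := LinearMap.ker ψ with hZdef
  have hZ : ∀ c : Fin n → F, c ∈ Z ↔ ∀ j ∈ S, c j = 0 := by
    intro c
    simp only [hZdef, LinearMap.mem_ker, hψ, LinearMap.funLeft_apply, funext_iff]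
    constructor
    · intro h j hj; exact h ⟨j, hj⟩
    · rintro h ⟨j, hj⟩; exact h j hj
  set C' : Submodule F (Fin (n - e) → F) := (C ⊓ Z).map ρ with hC'
  -- key sum identity
  have hsum : ∀ c w : Fin n → F, (∀ j ∈ S, c j = 0) →
      ∑ a, c (emb a) * w (emb a) = ∑ j, c j * w j := by
    intro c w hc
    have h1 : ∑ a, c (emb a) * w (emb a) = ∑ x : ↥(Sᶜ), c x * w x :=
      Fintype.sum_equiv g _ _ (fun a => rfl)
    rw [h1, Finset.sum_coe_sort (Sᶜ) (fun j => c j * w j)]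
    apply Finset.sum_subset (Finset.subset_univ _)
    intro j _ hj
    rw [Finset.mem_compl, not_not] at hj
    rw [hc j hj, zero_mul]
  -- dual codewords restrict
  have hdualmap : ∀ w ∈ dualCode C, ρ w ∈ dualCode C' := by
    intro w hw
    rw [mem_dualCode]
    rintro _ ⟨c, hc, rfl⟩
    have hcm : c ∈ C ⊓ Z := hc
    rw [Submodule.mem_inf] at hcm
    have h2 : ∑ a, ρ c a * ρ w a = ∑ j, c j * w j := hsum c w ((hZ c).mp hcm.2)
    rw [h2]
    exact mem_dualCode.mp hw c hcm.1
  -- weights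
  have hwt_le : ∀ v : Fin n → F, wt (ρ v) ≤ wt v := by
    intro v
    apply Finset.card_le_card_of_injOn emb
    · intro a ha
      simp only [wt, Finset.mem_coe, Finset.mem_filter, Finset.mem_univ, true_and] at ha ⊢
      exact ha
    · exact fun a _ b _ h => hembInj h
  have hwt_eq : ∀ c : Fin n → F, (∀ j ∈ S, c j = 0) → wt (ρ c) = wt c := by
    intro c hc
    refine le_antisymm (hwt_le c) ?_
    apply Finset.card_le_card_of_surjOn emb
    intro j hj
    simp only [wt, Finset.coe_filter, Finset.mem_univ, true_and, Set.mem_setOf_eq] at hj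
    have hjS : j ∉ S := fun h => hj (hc j h)
    obtain ⟨a, rfl⟩ := hembSurj j hjS
    refine ⟨a, ?_, rfl⟩
    simp only [wt, Finset.coe_filter, Finset.mem_univ, true_and, Set.mem_setOf_eq]
    exact hj
  -- availability
  have hav' : HasAvailability C' r t := by
    intro j'
    obtain ⟨h, hmem, hw, hj, hsupp⟩ := hav (emb j')
    refine ⟨fun a => ρ (h a), fun a => hdualmap _ (hmem a),
      fun a => le_trans (hwt_le _) (hw a), fun a => hj a, ?_⟩
    intro a b hab
    ext x
    simp only [Set.mem_inter_iff, Set.mem_setOf_eq, Set.mem_singleton_iff, hρap]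
    constructor
    · rintro ⟨h1, h2⟩
      have h3 : emb x ∈ ({l | h a l ≠ 0} ∩ {l | h b l ≠ 0}) := ⟨h1, h2⟩
      rw [hsupp a b hab] at h3
      exact hembInj h3
    · rintro rfl
      exact ⟨hj a, hj b⟩
  -- dimension bound
  set φ : ↥C →ₗ[F] (↥S → F) := ψ ∘ₗ C.subtype with hφ
  have hkerφ : LinearMap.ker φ = Submodule.comap C.subtype (C ⊓ Z) := by
    rw [hφ, LinearMap.ker_comp]
    ext x
    simp only [Submodule.mem_comap, Submodule.mem_inf, ← hZdef]
    exact ⟨fun h => ⟨x.2, h⟩, fun h => h.2⟩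
  have h5 : Module.finrank F (LinearMap.ker φ) = Module.finrank F ↥(C ⊓ Z) := by
    rw [hkerφ]
    exact (Submodule.comapSubtypeEquivOfLe inf_le_left).finrank_eq
  have h6 := LinearMap.finrank_range_add_finrank_ker φ
  set A : ↥D →ₗ[F] Module.Dual F (↥S → F) := dotLin F ↥S ∘ₗ ψ ∘ₗ D.subtype with hA
  have hAinj : LinearMap.ker A = ⊥ := by
    rw [LinearMap.ker_eq_bot']
    intro v hv
    apply Subtype.ext
    funext j
    by_cases hj : j ∈ S
    · have h7 : (A v) (Pi.single (⟨j, hj⟩ : ↥S) 1) = 0 := by rw [hv]; rfl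
      simpa [hA, hψ, LinearMap.funLeft_apply, dotLin, dotL_apply, Pi.single_apply, mul_ite] using h7
    · exact hSsupp j hj v.1 v.2
  have hAann : LinearMap.range A ≤ (LinearMap.range φ).dualAnnihilator := by
    rintro _ ⟨v, rfl⟩
    rw [Submodule.mem_dualAnnihilator]
    rintro _ ⟨c, rfl⟩
    show dotL _ _ = 0
    rw [dotL_apply]
    have h8 : ∑ x : ↥S, (v : Fin n → F) x * (c : Fin n → F) x
        = ∑ j ∈ S, (v : Fin n → F) j * (c : Fin n → F) j :=
      Finset.sum_coe_sort S (fun j => (v : Fin n → F) j * (c : Fin n → F) j)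
    have h9 : ∑ j ∈ S, (v : Fin n → F) j * (c : Fin n → F) j
        = ∑ j, (v : Fin n → F) j * (c : Fin n → F) j := by
      apply Finset.sum_subset (Finset.subset_univ _)
      intro j _ hj
      rw [hSsupp j hj v.1 v.2, zero_mul]
    have h10 : ∑ j, (v : Fin n → F) j * (c : Fin n → F) j = 0 := by
      have h11 := mem_dualCode.mp (hDle v.2) c.1 c.2
      rw [← h11]
      exact Finset.sum_congr rfl (fun j _ => mul_comm _ _)
    calc ∑ x : ↥S, (v : Fin n → F) x * (c : Fin n → F) x
        = ∑ j ∈ S, (v : Fin n → F) j * (c : Fin n → F) j := h8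
      _ = ∑ j, (v : Fin n → F) j * (c : Fin n → F) j := h9
      _ = 0 := h10
  have h12 : i ≤ Module.finrank F ((LinearMap.range φ).dualAnnihilator) := by
    calc i = Module.finrank F ↥D := hDrank.symm
      _ = Module.finrank F (LinearMap.range A) :=
          (LinearMap.finrank_range_of_inj (LinearMap.ker_eq_bot.mp hAinj)).symm
      _ ≤ _ := Submodule.finrank_mono hAann
  have h13 : Module.finrank F ((LinearMap.range φ).dualAnnihilator)
      + Module.finrank F (LinearMap.range φ) = Module.finrank F (↥S → F) := by
    rw [← (Subspace.quotEquivAnnihilator (LinearMap.range φ)).finrank_eq]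
    exact Submodule.finrank_quotient_add_finrank _
  have h14 : Module.finrank F (↥S → F) = e := by
    rw [Module.finrank_pi, Fintype.card_coe, hScard]
  -- dimension of C'
  set μ : ↥(C ⊓ Z) →ₗ[F] (Fin (n - e) → F) := ρ ∘ₗ (C ⊓ Z).subtype with hμ
  have hμker : LinearMap.ker μ = ⊥ := by
    rw [LinearMap.ker_eq_bot']
    intro v hv
    apply Subtype.ext
    funext j
    by_cases hj : j ∈ S
    · exact (hZ _).mp (Submodule.mem_inf.mp v.2).2 j hj
    · obtain ⟨a, rfl⟩ := hembSurj j hj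
      exact congrFun hv a
  have hμrange : LinearMap.range μ = C' := by
    rw [hμ, LinearMap.range_comp, Submodule.range_subtype]
  have h15 : Module.finrank F C' = Module.finrank F ↥(C ⊓ Z) := by
    rw [← hμrange]
    exact LinearMap.finrank_range_of_inj (LinearMap.ker_eq_bot.mp hμker)
  have hdim : (k : ℤ) + i - e ≤ Module.finrank F C' := by
    have hr : Module.finrank F (LinearMap.range φ) + i ≤ e := by
      calc Module.finrank F (LinearMap.range φ) + i
          ≤ Module.finrank F (LinearMap.range φ)
            + Module.finrank F ((LinearMap.range φ).dualAnnihilator) :=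
            Nat.add_le_add_left h12 _
        _ = e := by rw [add_comm, h13, h14]
    have h16 : Module.finrank F ↥C' = Module.finrank F (LinearMap.ker φ) := by
      rw [h15, ← h5]
    have h17 : Module.finrank F (LinearMap.range φ) + Module.finrank F ↥C' = k := by
      rw [h16]; exact h6
    clear hDcard hDe he hsuppcard hne
    omega
  refine ⟨C', hav', hdim, ?_⟩
  -- minimum distance
  have hC'ne : C' ≠ ⊥ := by
    intro hbot
    rw [hbot, finrank_bot] at hdim
    clear hDcard hDe he hsuppcard hne
    omega
  obtain ⟨c₀, hc₀, hc₀ne⟩ := Submodule.ne_bot_iff C' |>.mp hC'ne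
  have hW'ne : {w | ∃ c ∈ C', c ≠ 0 ∧ wt c = w}.Nonempty := ⟨wt c₀, c₀, hc₀, hc₀ne, rfl⟩
  obtain ⟨c', hc'C, hc'ne, hc'wt⟩ := Nat.sInf_mem hW'ne
  obtain ⟨c, hc, rfl⟩ := hc'C
  have hcm : c ∈ C ⊓ Z := hc
  rw [Submodule.mem_inf] at hcm
  apply Nat.sInf_le
  refine ⟨c, hcm.1, ?_, ?_⟩
  · intro h
    apply hc'ne
    rw [h, map_zero]
  · rw [← hwt_eq c ((hZ c).mp hcm.2)]
    exact hc'wt
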